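/- In the setting of the previous statement, with additionally t̲ = ess inf_W h > 0, one has ∫_W ‖x−a‖^r h(x) dλ^d(x) ≤ c₂₃ (1 + log(t̄/t̲)) n^{−(1+r/d)}, where c₂₃ = c₂₁^{r+d} λ^d(B(0,1)). -/

import Mathlib

open MeasureTheory Metric Set

/-- under the distance bound of STATEMENT 15 and with
`0 < t̲ ≤ h ≤ t̄` a.e. on `W`, the local inertia satisfies
`∫_W ‖x−a‖^r h dλ ≤ c₂₃ (1 + log(t̄/t̲)) n^{−(1+r/d)}` with
`c₂₃ = c₂₁^{r+d} λ^d(B(0,1))`. -/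
theorem stmt16 (d : ℕ) (hd : 0 < d) (r : ℝ) (hr : 0 < r) (c₂₁ : ℝ) (hc₂₁ : 0 < c₂₁)
    (n : ℕ) (hn : 1 ≤ n)
    (h : EuclideanSpace ℝ (Fin d) → ℝ) (hmeas : Measurable h) (hnn : ∀ x, 0 ≤ h x)
    (a : EuclideanSpace ℝ (Fin d)) (W : Set (EuclideanSpace ℝ (Fin d))) (hW : MeasurableSet W)
    (tlo tbar : ℝ) (htlo : 0 < tlo)
    (hlo : ∀ᵐ x ∂volume.restrict W, tlo ≤ h x)
    (hhi : ∀ᵐ x ∂volume.restrict W, h x ≤ tbar)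
    (hdist : ∀ᵐ x ∂volume.restrict W, 0 < h x →
      ‖x - a‖ ≤ c₂₁ * (n : ℝ) ^ (-(1 / (d : ℝ))) * h x ^ (-(1 / (r + d)))) :
    ∫⁻ x in W, ENNReal.ofReal (‖x - a‖ ^ r * h x) ∂volume ≤
      ENNReal.ofReal (c₂₁ ^ (r + d) * (volume (ball (0 : EuclideanSpace ℝ (Fin d)) 1)).toReal *
        (1 + Real.log (tbar / tlo)) * (n : ℝ) ^ (-(1 + r / d))) := by
  set V := volume (ball (0 : EuclideanSpace ℝ (Fin d)) 1) with hV
  have hVfin : V ≠ ⊤ := measure_ball_lt_top.ne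
  have hn0 : (0:ℝ) < (n:ℝ) := by exact_mod_cast Nat.lt_of_lt_of_le Nat.zero_lt_one hn
  have hd0 : (0:ℝ) < (d:ℝ) := by exact_mod_cast hd
  have hrd : (0:ℝ) < r + d := by positivity
  -- trivial case: tbar < tlo means W is null
  rcases lt_or_ge tbar tlo with hcase | hcase
  · have hfalse : ∀ᵐ x ∂volume.restrict W, False := by
      filter_upwards [hlo, hhi] with x h1 h2
      linarith
    have : volume.restrict W = 0 := by
      rw [← Measure.measure_univ_eq_zero]
      simpa using hfalse
    rw [this]
    simp
  -- main case
  have htbar : 0 < tbar := htlo.trans_le hcase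
  set A : ℝ := c₂₁ * (n : ℝ) ^ (-(1 / (d : ℝ))) with hA
  have hA0 : 0 < A := by positivity
  have hfm : Measurable fun x : EuclideanSpace ℝ (Fin d) => ‖x - a‖ ^ r := by fun_prop
  set μ' : Measure (EuclideanSpace ℝ (Fin d)) :=
    (volume.restrict W).withDensity (fun x => ENNReal.ofReal (‖x - a‖ ^ r)) with hμ'
  have step1 : ∫⁻ x in W, ENNReal.ofReal (‖x - a‖ ^ r * h x) ∂volume
      = ∫⁻ x, ENNReal.ofReal (h x) ∂μ' := by
    rw [hμ', lintegral_withDensity_eq_lintegral_mul _ (hfm.ennreal_ofReal) (hmeas.ennreal_ofReal)]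
    refine lintegral_congr fun x => ?_
    simp [ENNReal.ofReal_mul (Real.rpow_nonneg (norm_nonneg _) r)]
  have step2 : ∫⁻ x, ENNReal.ofReal (h x) ∂μ' = ∫⁻ t in Ioi (0:ℝ), μ' {x | t < h x} :=
    lintegral_eq_lintegral_meas_lt μ' (Filter.Eventually.of_forall hnn) hmeas.aemeasurable
  set C : ENNReal := ENNReal.ofReal (A ^ (r + (d:ℝ))) * V with hC
  have hCfin : C ≠ ⊤ := ENNReal.mul_ne_top ENNReal.ofReal_ne_top hVfin
  -- pointwise bound on μ' {x | t < h x}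
  have key : ∀ t : ℝ, 0 < t → μ' {x | t < h x} ≤ C * ENNReal.ofReal ((max t tlo)⁻¹) := by
    intro t ht
    set s := max t tlo with hs
    have hs0 : 0 < s := lt_max_of_lt_right htlo
    set R : ℝ := A * s ^ (-(1 / (r + (d:ℝ)))) with hR
    have hR0 : 0 < R := by positivity
    have hSm : MeasurableSet {x | t < h x} := measurableSet_lt measurable_const hmeas
    have hμ'app : μ' {x | t < h x}
        = ∫⁻ x in {x | t < h x}, ENNReal.ofReal (‖x - a‖ ^ r) ∂(volume.restrict W) := by
      rw [hμ', withDensity_apply _ hSm]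
    have hae : ∀ᵐ x ∂(volume.restrict W), x ∈ {x | t < h x} → ‖x - a‖ ≤ R := by
      filter_upwards [hlo, hdist] with x h1 h2 hx
      have hhx : 0 < h x := htlo.trans_le h1
      have hsx : s ≤ h x := max_le (le_of_lt hx) h1
      refine (h2 hhx).trans ?_
      have hmono : h x ^ (-(1 / (r + (d:ℝ)))) ≤ s ^ (-(1 / (r + (d:ℝ)))) := by
        rw [Real.rpow_neg hs0.le, Real.rpow_neg hhx.le]
        exact inv_anti₀ (Real.rpow_pos_of_pos hs0 _)
          (Real.rpow_le_rpow hs0.le hsx (by positivity))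
      calc c₂₁ * (n : ℝ) ^ (-(1 / (d : ℝ))) * h x ^ (-(1 / (r + (d:ℝ))))
          ≤ c₂₁ * (n : ℝ) ^ (-(1 / (d : ℝ))) * s ^ (-(1 / (r + (d:ℝ)))) :=
            mul_le_mul_of_nonneg_left hmono (by positivity)
        _ = R := rfl
    have hb1 : ∫⁻ x in {x | t < h x}, ENNReal.ofReal (‖x - a‖ ^ r) ∂(volume.restrict W)
        ≤ ENNReal.ofReal (R ^ r) * (volume.restrict W) {x | t < h x} := by
      rw [← setLIntegral_const]
      refine setLIntegral_mono_ae' hSm ?_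
      filter_upwards [hae] with x hx hmem
      exact ENNReal.ofReal_le_ofReal (Real.rpow_le_rpow (norm_nonneg _) (hx hmem) hr.le)
    have hb2 : (volume.restrict W) {x | t < h x} ≤ volume (closedBall a R) := by
      have hsub : ∀ᵐ x ∂(volume.restrict W), x ∈ {x | t < h x} → x ∈ closedBall a R := by
        filter_upwards [hae] with x hx hmem
        simpa [Metric.mem_closedBall, dist_eq_norm] using hx hmem
      calc (volume.restrict W) {x | t < h x}
          ≤ (volume.restrict W) (closedBall a R) := measure_mono_ae hsub
        _ = volume (closedBall a R ∩ W) := Measure.restrict_apply measurableSet_closedBall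
        _ ≤ volume (closedBall a R) := measure_mono inter_subset_left
    have hball : volume (closedBall a R) = ENNReal.ofReal (R ^ (d:ℝ)) * V := by
      rw [Measure.addHaar_closedBall volume a hR0.le]
      congr 2
      rw [← Real.rpow_natCast R (Module.finrank ℝ (EuclideanSpace ℝ (Fin d)))]
      congr 1
      simp [finrank_euclideanSpace_fin]
    have hRrd : R ^ r * R ^ (d:ℝ) = A ^ (r + (d:ℝ)) * s⁻¹ := by
      rw [← Real.rpow_add hR0, hR, Real.mul_rpow hA0.le (Real.rpow_nonneg hs0.le _),
        ← Real.rpow_mul hs0.le]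
      congr 1
      rw [← Real.rpow_neg_one s]
      congr 1
      field_simp
    calc μ' {x | t < h x}
        ≤ ENNReal.ofReal (R ^ r) * (ENNReal.ofReal (R ^ (d:ℝ)) * V) := by
          rw [hμ'app]
          exact hb1.trans (mul_le_mul_right (hb2.trans_eq hball) _)
      _ = ENNReal.ofReal (R ^ r * R ^ (d:ℝ)) * V := by
          rw [ENNReal.ofReal_mul (Real.rpow_nonneg hR0.le _), mul_assoc]
      _ = C * ENNReal.ofReal (s⁻¹) := by
          rw [hRrd, hC, ENNReal.ofReal_mul (by positivity)]
          ring
  have key2 : ∀ t : ℝ, tbar ≤ t → μ' {x | t < h x} = 0 := by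
    intro t ht
    rw [hμ', withDensity_apply _ (measurableSet_lt measurable_const hmeas)]
    have hnull : (volume.restrict W) {x | t < h x} = 0 := by
      rw [measure_eq_zero_iff_ae_notMem]
      filter_upwards [hhi] with x hx
      simp only [mem_setOf_eq, not_lt]
      linarith
    exact setLIntegral_measure_zero _ _ hnull
  -- integrate the bound
  have hL0 : 0 ≤ Real.log (tbar / tlo) := Real.log_nonneg ((one_le_div htlo).mpr hcase)
  have hbound : ∫⁻ t in Ioi (0:ℝ), μ' {x | t < h x}
      ≤ C * (1 + ENNReal.ofReal (Real.log (tbar / tlo))) := by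
    have hsplit : Ioi (0:ℝ) = Ioo 0 tbar ∪ Ici tbar := (Ioo_union_Ici_eq_Ioi htbar).symm
    have h2 : ∫⁻ t in Ici tbar, μ' {x | t < h x} = 0 := by
      rw [← lintegral_zero]
      refine setLIntegral_congr_fun measurableSet_Ici ?_
      exact fun t ht => key2 t ht
    have h1 : ∫⁻ t in Ioo 0 tbar, μ' {x | t < h x}
        ≤ C * (1 + ENNReal.ofReal (Real.log (tbar / tlo))) := by
      calc ∫⁻ t in Ioo 0 tbar, μ' {x | t < h x}
          ≤ ∫⁻ t in Ioo 0 tbar, C * ENNReal.ofReal ((max t tlo)⁻¹) :=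
            setLIntegral_mono' measurableSet_Ioo fun t ht => key t ht.1
        _ = C * ∫⁻ t in Ioo 0 tbar, ENNReal.ofReal ((max t tlo)⁻¹) :=
            lintegral_const_mul' _ _ hCfin
        _ ≤ C * (1 + ENNReal.ofReal (Real.log (tbar / tlo))) := by
            refine mul_le_mul_right ?_ C
            calc ∫⁻ t in Ioo 0 tbar, ENNReal.ofReal ((max t tlo)⁻¹)
                ≤ ∫⁻ t in Ioc 0 tlo ∪ Ioc tlo tbar, ENNReal.ofReal ((max t tlo)⁻¹) := by
                  refine lintegral_mono_set ?_
                  rw [Ioc_union_Ioc_eq_Ioc htlo.le hcase]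
                  exact Ioo_subset_Ioc_self
              _ ≤ (∫⁻ t in Ioc 0 tlo, ENNReal.ofReal ((max t tlo)⁻¹))
                  + ∫⁻ t in Ioc tlo tbar, ENNReal.ofReal ((max t tlo)⁻¹) :=
                  lintegral_union_le _ _ _
              _ ≤ 1 + ENNReal.ofReal (Real.log (tbar / tlo)) := by
                  refine add_le_add ?_ ?_
                  · calc ∫⁻ t in Ioc 0 tlo, ENNReal.ofReal ((max t tlo)⁻¹)
                        = ∫⁻ _ in Ioc (0:ℝ) tlo, ENNReal.ofReal (tlo⁻¹) := by
                          refine setLIntegral_congr_fun measurableSet_Ioc ?_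
                          intro t ht; dsimp only
                          rw [max_eq_right ht.2]
                      _ = ENNReal.ofReal (tlo⁻¹) * volume (Ioc (0:ℝ) tlo) :=
                          setLIntegral_const _ _
                      _ = 1 := by
                          rw [Real.volume_Ioc, sub_zero,
                            ← ENNReal.ofReal_mul (by positivity), inv_mul_cancel₀ htlo.ne']
                          simp
                      _ ≤ 1 := le_rfl
                  · have hIoc : ∫⁻ t in Ioc tlo tbar, ENNReal.ofReal ((max t tlo)⁻¹)
                        = ∫⁻ t in Ioc tlo tbar, ENNReal.ofReal (t⁻¹) := by
                      refine setLIntegral_congr_fun measurableSet_Ioc ?_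
                      intro t ht; dsimp only
                      rw [max_eq_left ht.1.le]
                    have hint : IntegrableOn (fun t : ℝ => t⁻¹) (Ioc tlo tbar) volume := by
                      have := (intervalIntegral.intervalIntegrable_inv (f := fun x : ℝ => x)
                        (fun x hx => by
                          have : tlo ≤ x := by
                            rcases hx with ⟨h1, _⟩
                            simpa [min_eq_left hcase] using h1
                          exact (htlo.trans_le this).ne') continuousOn_id (μ := volume)
                        (a := tlo) (b := tbar)).1
                      simpa using this
                    rw [hIoc, ← ofReal_integral_eq_lintegral_ofReal hint ?_]
                    · refine ENNReal.ofReal_le_ofReal (le_of_eq ?_)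
                      rw [← intervalIntegral.integral_of_le hcase]
                      refine integral_inv ?_
                      intro hmem
                      rcases hmem with ⟨h1, _⟩
                      rw [min_eq_left hcase] at h1
                      exact absurd h1 (not_le.mpr htlo)
                    · filter_upwards [ae_restrict_mem measurableSet_Ioc] with t ht
                      exact inv_nonneg.mpr (htlo.trans ht.1).le
    calc ∫⁻ t in Ioi (0:ℝ), μ' {x | t < h x}
        ≤ (∫⁻ t in Ioo 0 tbar, μ' {x | t < h x}) + ∫⁻ t in Ici tbar, μ' {x | t < h x} := by
          rw [hsplit]; exact lintegral_union_le _ _ _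
      _ ≤ C * (1 + ENNReal.ofReal (Real.log (tbar / tlo))) := by rw [h2, add_zero]; exact h1
  -- final arithmetic
  rw [step1, step2]
  refine hbound.trans (le_of_eq ?_)
  have hApow : A ^ (r + (d:ℝ)) = c₂₁ ^ (r + (d:ℝ)) * (n : ℝ) ^ (-(1 + r / (d:ℝ))) := by
    rw [hA, Real.mul_rpow hc₂₁.le (Real.rpow_nonneg hn0.le _), ← Real.rpow_mul hn0.le]
    congr 2
    field_simp
    ring
  have h1L : (1 : ENNReal) + ENNReal.ofReal (Real.log (tbar / tlo))
      = ENNReal.ofReal (1 + Real.log (tbar / tlo)) := by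
    rw [ENNReal.ofReal_add zero_le_one hL0, ENNReal.ofReal_one]
  have e1 : c₂₁ ^ (r + (d:ℝ)) * V.toReal * (1 + Real.log (tbar / tlo)) * (n:ℝ) ^ (-(1 + r/(d:ℝ)))
      = (A ^ (r + (d:ℝ)) * (1 + Real.log (tbar / tlo))) * V.toReal := by
    rw [hApow]; ring
  rw [hC, h1L, e1, ENNReal.ofReal_mul (mul_nonneg (Real.rpow_nonneg hA0.le _) (by linarith)),
    ENNReal.ofReal_toReal hVfin, ENNReal.ofReal_mul (Real.rpow_nonneg hA0.le _)]
  ring
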